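/- Consider the stochastic block model with parameters satisfying condition (C1). Then for every ε > 0, with probability tending to 1 as N → ∞ along multiples of M, all vertex degrees are positive and the matrix R := B − A' (with B := D^{−1/2} A D^{−1/2}) satisfies ‖R‖_∞ ≤ (√3 + ε)·(log N/γ_min)^{1/4}·(γ_max/γ_min)^{1/2}, where ‖R‖_∞ := max_v Σ_w |R_{v,w}| is the maximum absolute row sum. -/

import Mathlib

open MeasureTheory Matrix Filter Finset Real Topology ProbabilityTheory Kronecker
open scoped ENNReal NNReal

namespace SBM

noncomputable def eigsList {ι : Type*} [Fintype ι] [DecidableEq ι] (A : Matrix ι ι ℝ) : List ℝ :=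
  if h : A.IsHermitian then ((Finset.univ.val.map h.eigenvalues).sort (· ≤ ·)).reverse else []

/-- `eig A k` is the `k`-th largest eigenvalue (1-indexed, with multiplicity) of the
symmetric real matrix `A`. -/
noncomputable def eig {ι : Type*} [Fintype ι] [DecidableEq ι] (A : Matrix ι ι ℝ) (k : ℕ) : ℝ :=
  (eigsList A).getD (k - 1) 0

/-- Spectral norm of a symmetric matrix: largest absolute value of an eigenvalue. -/
noncomputable def specNorm {ι : Type*} [Fintype ι] [DecidableEq ι] (A : Matrix ι ι ℝ) : ℝ :=
  ((eigsList A).map (fun x => |x|)).foldr max 0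

noncomputable def vmin {M : ℕ} (f : Fin M → ℝ) : ℝ := sInf (Set.range f)
noncomputable def vmax {M : ℕ} (f : Fin M → ℝ) : ℝ := sSup (Set.range f)

/-- Vertex set of the stochastic block model: `M` blocks of size `n` each. -/
abbrev Vtx (M n : ℕ) := Fin M × Fin n

/-- Probability of an edge (or loop), depending on the blocks of its endpoints. -/
noncomputable def edgeProb (M n : ℕ) (p : Fin M → ℝ) (q : ℝ) : Sym2 (Vtx M n) → ℝ :=
  Sym2.lift ⟨fun v w => if v.1 = w.1 then p v.1 else q, by
    intro v w
    dsimp only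
    rcases eq_or_ne v.1 w.1 with h | h
    · rw [if_pos h, if_pos h.symm, h]
    · rw [if_neg h, if_neg (Ne.symm h)]⟩

/-- Bernoulli measure on `Bool` with success probability `r`. -/
noncomputable def bern (r : ℝ) : Measure Bool :=
  ENNReal.ofReal r • Measure.dirac true + ENNReal.ofReal (1 - r) • Measure.dirac false

/-- The stochastic block model measure: all unordered pairs (loops allowed) independent. -/
noncomputable def sbmMeasure (M n : ℕ) (p : Fin M → ℝ) (q : ℝ) :
    Measure (Sym2 (Vtx M n) → Bool) :=
  Measure.pi fun e => bern (edgeProb M n p q e)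

noncomputable def adj {M n : ℕ} (ω : Sym2 (Vtx M n) → Bool) : Matrix (Vtx M n) (Vtx M n) ℝ :=
  Matrix.of fun v w => if ω s(v, w) then 1 else 0

noncomputable def deg {M n : ℕ} (ω : Sym2 (Vtx M n) → Bool) (v : Vtx M n) : ℝ := ∑ w, adj ω v w

/-- Expected degree of a vertex in block `m`. -/
noncomputable def gam (M n : ℕ) (p : Fin M → ℝ) (q : ℝ) (m : Fin M) : ℝ :=
  (n : ℝ) * p m + ((M : ℝ) - 1) * (n : ℝ) * q

noncomputable def gmin (M n : ℕ) (p : Fin M → ℝ) (q : ℝ) : ℝ := vmin (gam M n p q)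
noncomputable def gmax (M n : ℕ) (p : Fin M → ℝ) (q : ℝ) : ℝ := vmax (gam M n p q)

noncomputable def sigmaSq (M : ℕ) (p : Fin M → ℝ) (q : ℝ) : ℝ :=
  (1 / M) * (vmax (fun m => p m * (1 - p m)) + ((M : ℝ) - 1) * q * (1 - q))

/-- The matrix of block transition probabilities. -/
noncomputable def PM (M : ℕ) (p : Fin M → ℝ) (q : ℝ) : Matrix (Fin M) (Fin M) ℝ :=
  Matrix.of fun i j => if i = j then p i else q

/-- The rescaled matrix of block transition probabilities `Γ^{-1/2} P_M Γ^{-1/2}`. -/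
noncomputable def PM' (M n : ℕ) (p : Fin M → ℝ) (q : ℝ) : Matrix (Fin M) (Fin M) ℝ :=
  Matrix.of fun i j => PM M p q i j / Real.sqrt (gam M n p q i * gam M n p q j)

/-- The rescaled adjacency matrix `(E D)^{-1/2} A (E D)^{-1/2}`. -/
noncomputable def Aprime (M n : ℕ) (p : Fin M → ℝ) (q : ℝ) (ω : Sym2 (Vtx M n) → Bool) :
    Matrix (Vtx M n) (Vtx M n) ℝ :=
  Matrix.of fun v w => adj ω v w / Real.sqrt (gam M n p q v.1 * gam M n p q w.1)

/-- The entrywise expectation of the rescaled adjacency matrix. -/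
noncomputable def EAprime (M n : ℕ) (p : Fin M → ℝ) (q : ℝ) : Matrix (Vtx M n) (Vtx M n) ℝ :=
  Matrix.of fun v w => edgeProb M n p q s(v, w) / Real.sqrt (gam M n p q v.1 * gam M n p q w.1)

/-- The symmetrically normalized adjacency matrix `D^{-1/2} A D^{-1/2}`. -/
noncomputable def Bmat {M n : ℕ} (ω : Sym2 (Vtx M n) → Bool) : Matrix (Vtx M n) (Vtx M n) ℝ :=
  Matrix.of fun v w => adj ω v w / Real.sqrt (deg ω v * deg ω w)

noncomputable def numEdges {M n : ℕ} (ω : Sym2 (Vtx M n) → Bool) : ℕ :=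
  (Finset.univ.filter fun e : Sym2 (Vtx M n) => ω e = true).card

noncomputable def numLoops {M n : ℕ} (ω : Sym2 (Vtx M n) → Bool) : ℕ :=
  (Finset.univ.filter fun v : Vtx M n => ω s(v, v) = true).card

/-- The realized simple graph (loops discarded). -/
def graphOf {M n : ℕ} (ω : Sym2 (Vtx M n) → Bool) : SimpleGraph (Vtx M n) where
  Adj v w := v ≠ w ∧ ω s(v, w) = true
  symm := by constructor; intro v w h; exact ⟨h.1.symm, by rw [Sym2.eq_swap]; exact h.2⟩
  loopless := by constructor; intro v h; exact h.1 rfl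

/-- Variance of the degree of a vertex in block `m`. -/
noncomputable def upsSq (M n : ℕ) (p : Fin M → ℝ) (q : ℝ) (m : Fin M) : ℝ :=
  (n : ℝ) * (p m * (1 - p m)) + ((M : ℝ) - 1) * (n : ℝ) * (q * (1 - q))

noncomputable def gbar (M n : ℕ) (p : Fin M → ℝ) (q : ℝ) : ℝ := (1 / M) * ∑ m, gam M n p q m
noncomputable def pbar (M : ℕ) (p : Fin M → ℝ) : ℝ := (1 / M) * ∑ m, p m
noncomputable def ubarSq (M n : ℕ) (p : Fin M → ℝ) (q : ℝ) : ℝ := (1 / M) * ∑ m, upsSq M n p q m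

/-- The invariant distribution `π_v = d_v / (2|E| - |L|)`. -/
noncomputable def piStat {M n : ℕ} (ω : Sym2 (Vtx M n) → Bool) (v : Vtx M n) : ℝ :=
  deg ω v / (2 * (numEdges ω : ℝ) - (numLoops ω : ℝ))

/-- The orthogonal projection onto the eigenvector `√π` of `B` (for the eigenvalue 1). -/
noncomputable def Pproj {M n : ℕ} (ω : Sym2 (Vtx M n) → Bool) : Matrix (Vtx M n) (Vtx M n) ℝ :=
  Matrix.of fun v w => Real.sqrt (piStat ω v) * Real.sqrt (piStat ω w)

/-- Basis-free form of `Σ_{k=2}^N u_{k,w}^2 / (1 - λ_k(B))`: on the event that the graph is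
connected (so that `λ_1(B) = 1` is simple with eigenvector `√π`), it equals the diagonal entry
at `w` of `(I - B + P)⁻¹ - P` where `P` is the projection onto `√π`. -/
noncomputable def spectralSum {M n : ℕ} (ω : Sym2 (Vtx M n) → Bool) (w : Vtx M n) : ℝ :=
  ((1 - Bmat ω + Pproj ω)⁻¹ - Pproj ω) w w

/-- The good event: all degrees positive and `λ_k(B) ≠ 1` for `k ≥ 2`. -/
def good (M n : ℕ) (ω : Sym2 (Vtx M n) → Bool) : Prop :=
  (∀ v, 0 < deg ω v) ∧ ∀ k, 2 ≤ k → k ≤ M * n → eig (Bmat ω) k ≠ 1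

open Classical in
/-- Spectral formula for the hitting time averaged over the starting vertex,
`H_w = ((2|E| - |L|)/d_w) Σ_{k=2}^N u_{k,w}^2/(1 - λ_k(B))`, set to `0` outside `good`. -/
noncomputable def Hitting {M n : ℕ} (ω : Sym2 (Vtx M n) → Bool) (w : Vtx M n) : ℝ :=
  if good M n ω then
    ((2 * (numEdges ω : ℝ) - (numLoops ω : ℝ)) / deg ω w) * spectralSum ω w
  else 0

open Classical in
/-- `Σ_{k=2}^N u_{k,w}^2/(1 - λ_k(B)) - 1`, set to `0` outside `good`. -/
noncomputable def spectralTerm {M n : ℕ} (ω : Sym2 (Vtx M n) → Bool) (w : Vtx M n) : ℝ :=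
  if good M n ω then spectralSum ω w - 1 else 0

/-- `u` is an orthonormal eigenbasis of `B(ω)`, with `u k` an eigenvector for the
`(k+1)`-st largest eigenvalue (so `u 0` corresponds to `λ_1`). -/
def eigBasis {M n : ℕ} (ω : Sym2 (Vtx M n) → Bool) (u : Fin (M * n) → Vtx M n → ℝ) : Prop :=
  (∀ k l, (u k) ⬝ᵥ (u l) = if k = l then 1 else 0) ∧
    ∀ k, (Bmat ω) *ᵥ (u k) = eig (Bmat ω) ((k : ℕ) + 1) • (u k)

/-- Standing assumptions on the parameters: `0 < p_m < 1` descending, `0 < q < 1`. -/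
def params (M : ℕ) (p : ℕ → Fin M → ℝ) (q : ℕ → ℝ) : Prop :=
  ∀ n : ℕ, (∀ m, 0 < p n m ∧ p n m < 1) ∧ (0 < q n ∧ q n < 1) ∧
    ∀ i j : Fin M, i ≤ j → p n j ≤ p n i

/-- Condition (C1). -/
noncomputable def condC1 (M : ℕ) (p : ℕ → Fin M → ℝ) (q : ℕ → ℝ) : Prop :=
  ∀ m : Fin M, Tendsto (fun n : ℕ =>
    ((M : ℝ) * Real.log (M * n) ^ 4 /
        ((M * n : ℝ) * p n m + (M * n : ℝ) * ((M : ℝ) - 1) * q n)) *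
      (gmax M n (p n) (q n) / gmin M n (p n) (q n)) ^ 2) atTop (𝓝 0)

/-- Condition (C2). -/
noncomputable def condC2 (M : ℕ) (p : ℕ → Fin M → ℝ) (q : ℕ → ℝ) : Prop :=
  Tendsto (fun n : ℕ => (((M : ℝ) - 1) * q n) ^ 2 /
    (((M : ℝ) * Real.log (M * n) / (M * n : ℝ)) ^ ((1 : ℝ)/4) *
      vmin (p n) ^ ((5 : ℝ)/4) * vmax (p n) ^ ((1 : ℝ)/2))) atTop atTop

/-- Condition (C1'). -/
noncomputable def condC1' (M : ℕ) (p : ℕ → Fin M → ℝ) (q : ℕ → ℝ) : Prop :=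
  ∀ m : Fin M, Tendsto (fun n : ℕ =>
    ((M : ℝ) * Real.log (M * n) ^ 4 /
        ((M * n : ℝ) * (p n m * (1 - p n m)) +
          (M * n : ℝ) * ((M : ℝ) - 1) * (q n * (1 - q n)))) *
      (vmax (p n) / vmin (p n)) ^ 2) atTop (𝓝 0)
-- basics
lemma edgeProb_mk {M n : ℕ} (p : Fin M → ℝ) (q : ℝ) (v w : Vtx M n) :
    edgeProb M n p q s(v, w) = if v.1 = w.1 then p v.1 else q := rfl

lemma edgeProb_nonneg {M n : ℕ} {p : Fin M → ℝ} {q : ℝ} (hp : ∀ m, 0 ≤ p m) (hq : 0 ≤ q)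
    (e : Sym2 (Vtx M n)) : 0 ≤ edgeProb M n p q e := by
  induction e using Sym2.ind with
  | _ v w =>
    rw [edgeProb_mk]
    split <;> simp [hp, hq]

lemma edgeProb_le_one {M n : ℕ} {p : Fin M → ℝ} {q : ℝ} (hp : ∀ m, p m ≤ 1) (hq : q ≤ 1)
    (e : Sym2 (Vtx M n)) : edgeProb M n p q e ≤ 1 := by
  induction e using Sym2.ind with
  | _ v w =>
    rw [edgeProb_mk]
    split <;> simp [hp, hq]

lemma bern_isProb {r : ℝ} (h0 : 0 ≤ r) (h1 : r ≤ 1) : IsProbabilityMeasure (bern r) := by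
  constructor
  simp only [bern, Measure.add_apply, Measure.smul_apply, Measure.dirac_apply' _ MeasurableSet.univ,
    Set.indicator_univ, smul_eq_mul, mul_one, Pi.one_apply]
  rw [← ENNReal.ofReal_add h0 (by linarith)]
  norm_num

lemma measurableSet_all {M n : ℕ} (S : Set (Sym2 (Vtx M n) → Bool)) : MeasurableSet S := by
  have hsing : ∀ ω : Sym2 (Vtx M n) → Bool, MeasurableSet {ω} := by
    intro ω
    have : {ω} = ⋂ e, (fun f : Sym2 (Vtx M n) → Bool => f e) ⁻¹' {ω e} := by
      ext f
      simp [funext_iff]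
    rw [this]
    exact MeasurableSet.iInter fun e => (measurable_pi_apply e) (measurableSet_singleton _)
  have : S = ⋃ ω ∈ S, {ω} := by simp
  rw [this]
  exact MeasurableSet.biUnion (Set.to_countable S) fun ω _ => hsing ω

lemma measurable_all {M n : ℕ} {X : Type*} [MeasurableSpace X]
    (f : (Sym2 (Vtx M n) → Bool) → X) : Measurable f := fun _ _ => measurableSet_all _

instance instMSC {M n : ℕ} : MeasurableSingletonClass (Sym2 (Vtx M n) → Bool) :=
  ⟨fun _ => measurableSet_all _⟩

lemma sum_edgeProb {M n : ℕ} (p : Fin M → ℝ) (q : ℝ) (v : Vtx M n) :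
    ∑ w : Vtx M n, edgeProb M n p q s(v, w) = gam M n p q v.1 := by
  rw [Fintype.sum_prod_type]
  have : ∀ m' : Fin M, ∑ j : Fin n, edgeProb M n p q s(v, Prod.mk m' j) =
      (n : ℝ) * (if v.1 = m' then p v.1 else q) := by
    intro m'
    simp only [edgeProb_mk]
    rcases eq_or_ne v.1 m' with h | h <;> simp [h, mul_comm]
  simp only [this]
  have hsplit : ∀ m' : Fin M, (n : ℝ) * (if v.1 = m' then p v.1 else q) =
      (if v.1 = m' then (n : ℝ) * (p v.1 - q) else 0) + (n : ℝ) * q := by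
    intro m'; split <;> ring
  simp only [hsplit]
  rw [Finset.sum_add_distrib, Finset.sum_ite_eq Finset.univ v.1 (fun _ => (n : ℝ) * (p v.1 - q))]
  simp [gam, Finset.card_univ]
  ring

lemma exp_deg_eq {M n : ℕ} (t : ℝ) (v : Vtx M n) (ω : Sym2 (Vtx M n) → Bool) :
    Real.exp (t * deg ω v) = ∏ w, (if ω s(v, w) then Real.exp t else 1) := by
  rw [deg, Finset.mul_sum, Real.exp_sum]
  refine Finset.prod_congr rfl fun w _ => ?_
  by_cases h : ω s(v, w) <;> simp [adj, h]

lemma pair_injective {M n : ℕ} (v : Vtx M n) :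
    Function.Injective (fun w : Vtx M n => s(v, w)) := by
  intro a b h
  simp only [Sym2.eq_iff] at h
  rcases h with ⟨_, h⟩ | ⟨h1, h2⟩
  · exact h
  · exact h2.trans h1

lemma bern_isFinite {r : ℝ} : IsFiniteMeasure (bern r) := by
  constructor
  simp only [bern, Measure.add_apply, Measure.smul_apply, smul_eq_mul]
  exact ENNReal.add_lt_top.2 ⟨ENNReal.mul_lt_top ENNReal.ofReal_lt_top (by simp),
    ENNReal.mul_lt_top ENNReal.ofReal_lt_top (by simp)⟩

lemma integral_bern {r : ℝ} (h0 : 0 ≤ r) (h1 : r ≤ 1) (f : Bool → ℝ) :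
    ∫ b, f b ∂bern r = r * f true + (1 - r) * f false := by
  haveI h1' : IsFiniteMeasure (ENNReal.ofReal r • Measure.dirac true) := by
    constructor
    simp only [Measure.smul_apply, smul_eq_mul]
    exact ENNReal.mul_lt_top ENNReal.ofReal_lt_top (by simp)
  haveI h2' : IsFiniteMeasure (ENNReal.ofReal (1 - r) • Measure.dirac false) := by
    constructor
    simp only [Measure.smul_apply, smul_eq_mul]
    exact ENNReal.mul_lt_top ENNReal.ofReal_lt_top (by simp)
  rw [bern, integral_add_measure Integrable.of_finite Integrable.of_finite,
    integral_smul_measure, integral_smul_measure, integral_dirac, integral_dirac]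
  simp [ENNReal.toReal_ofReal, h0, sub_nonneg.2 h1, smul_eq_mul]

lemma integral_exp_deg {M n : ℕ} {p : Fin M → ℝ} {q : ℝ}
    (hp0 : ∀ m, 0 ≤ p m) (hp1 : ∀ m, p m ≤ 1) (hq0 : 0 ≤ q) (hq1 : q ≤ 1)
    (t : ℝ) (v : Vtx M n) :
    ∫ ω, Real.exp (t * deg ω v) ∂sbmMeasure M n p q =
      ∏ w : Vtx M n, (1 + edgeProb M n p q s(v, w) * (Real.exp t - 1)) := by
  set r : Sym2 (Vtx M n) → ℝ := edgeProb M n p q with hr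
  have hr0 : ∀ e, 0 ≤ r e := edgeProb_nonneg hp0 hq0
  have hr1 : ∀ e, r e ≤ 1 := edgeProb_le_one hp1 hq1
  set F : Sym2 (Vtx M n) → Bool → ℝ :=
    fun e b => ∏ w ∈ Finset.univ.filter (fun w : Vtx M n => s(v, w) = e),
      (if b then Real.exp t else 1) with hF
  -- step A : pointwise identity
  have hA : ∀ ω : Sym2 (Vtx M n) → Bool, Real.exp (t * deg ω v) = ∏ e, F e (ω e) := by
    intro ω
    rw [exp_deg_eq]
    rw [← Finset.prod_fiberwise_of_maps_to (g := fun w : Vtx M n => s(v, w))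
      (t := Finset.univ) (fun w _ => Finset.mem_univ _)
      (fun w => if ω s(v, w) then Real.exp t else 1)]
    refine Finset.prod_congr rfl fun e _ => ?_
    refine Finset.prod_congr rfl fun w hw => ?_
    rw [Finset.mem_filter] at hw
    rw [hw.2]
  -- step B : product formula
  have hB : ∫ ω, Real.exp (t * deg ω v) ∂sbmMeasure M n p q =
      ∏ e : Sym2 (Vtx M n), ∫ b, F e b ∂bern (r e) := by
    letI mι : (e : Sym2 (Vtx M n)) → MeasureSpace ((fun _ : Sym2 (Vtx M n) => Bool) e) :=
      fun e => ⟨bern (r e)⟩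
    have hsf : ∀ e : Sym2 (Vtx M n), SigmaFinite ((mι e).volume) := by
      intro e
      haveI := (bern_isFinite (r := r e))
      exact inferInstance
    have key := MeasureTheory.integral_fintype_prod_eq_prod (𝕜 := ℝ)
      (E := fun _ : Sym2 (Vtx M n) => Bool) F (μ := fun e => (mι e).volume)
    have hvol : (volume : Measure (Sym2 (Vtx M n) → Bool)) = sbmMeasure M n p q := rfl
    simp only [hA]
    rw [← hvol]
    exact key
  rw [hB]
  -- step C : compute each factor
  have hC : ∀ e : Sym2 (Vtx M n), ∫ b, F e b ∂bern (r e) =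
      r e * Real.exp t ^ (Finset.univ.filter (fun w : Vtx M n => s(v, w) = e)).card
        + (1 - r e) := by
    intro e
    rw [integral_bern (hr0 e) (hr1 e)]
    simp [hF, Finset.prod_const]
  simp only [hC]
  -- step D : restrict to the image of w ↦ s(v,w)
  have hD : ∏ e : Sym2 (Vtx M n),
      (r e * Real.exp t ^ (Finset.univ.filter (fun w : Vtx M n => s(v, w) = e)).card
        + (1 - r e)) =
      ∏ e ∈ Finset.univ.image (fun w : Vtx M n => s(v, w)),
      (r e * Real.exp t ^ (Finset.univ.filter (fun w : Vtx M n => s(v, w) = e)).card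
        + (1 - r e)) := by
    symm
    refine Finset.prod_subset (Finset.subset_univ _) ?_
    intro e _ he
    have hfib : Finset.univ.filter (fun w : Vtx M n => s(v, w) = e) = ∅ := by
      rw [Finset.filter_eq_empty_iff]
      intro w _
      intro hcon
      exact he (Finset.mem_image.2 ⟨w, Finset.mem_univ _, hcon⟩)
    rw [hfib]
    simp
  rw [hD, Finset.prod_image (fun a _ b _ h => pair_injective v h)]
  refine Finset.prod_congr rfl fun w _ => ?_
  have hfib : Finset.univ.filter (fun w' : Vtx M n => s(v, w') = s(v, w)) = {w} := by
    ext w'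
    simp only [Finset.mem_filter, Finset.mem_univ, true_and, Finset.mem_singleton]
    exact ⟨fun h => pair_injective v h, fun h => by rw [h]⟩
  rw [hfib]
  simp
  ring

lemma sbm_isProb {M n : ℕ} {p : Fin M → ℝ} {q : ℝ}
    (hp0 : ∀ m, 0 ≤ p m) (hp1 : ∀ m, p m ≤ 1) (hq0 : 0 ≤ q) (hq1 : q ≤ 1) :
    IsProbabilityMeasure (sbmMeasure M n p q) := by
  haveI : ∀ e : Sym2 (Vtx M n), IsProbabilityMeasure (bern (edgeProb M n p q e)) :=
    fun e => bern_isProb (edgeProb_nonneg hp0 hq0 e) (edgeProb_le_one hp1 hq1 e)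
  unfold sbmMeasure
  infer_instance

lemma prod_one_add_le {M n : ℕ} {p : Fin M → ℝ} {q : ℝ}
    (hp0 : ∀ m, 0 ≤ p m) (hp1 : ∀ m, p m ≤ 1) (hq0 : 0 ≤ q) (hq1 : q ≤ 1)
    (v : Vtx M n) {c : ℝ} (hc : -1 ≤ c) :
    ∏ w : Vtx M n, (1 + edgeProb M n p q s(v, w) * c) ≤
      Real.exp (gam M n p q v.1 * c) := by
  have h1 : ∏ w : Vtx M n, (1 + edgeProb M n p q s(v, w) * c) ≤
      ∏ w : Vtx M n, Real.exp (edgeProb M n p q s(v, w) * c) := by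
    refine Finset.prod_le_prod (fun w _ => ?_) (fun w _ => ?_)
    · have h0 := edgeProb_nonneg hp0 hq0 s(v, w)
      have h1 := edgeProb_le_one hp1 hq1 s(v, w)
      nlinarith
    · linarith [Real.add_one_le_exp (edgeProb M n p q s(v, w) * c)]
  refine h1.trans ?_
  rw [← Real.exp_sum, ← Finset.sum_mul, sum_edgeProb]

lemma chernoff_ge {M n : ℕ} {p : Fin M → ℝ} {q : ℝ}
    (hp0 : ∀ m, 0 ≤ p m) (hp1 : ∀ m, p m ≤ 1) (hq0 : 0 ≤ q) (hq1 : q ≤ 1)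
    (v : Vtx M n) (t a : ℝ) (ht : 0 ≤ t) :
    (sbmMeasure M n p q {ω | a ≤ deg ω v}).toReal ≤
      Real.exp (gam M n p q v.1 * (Real.exp t - 1) - t * a) := by
  haveI := sbm_isProb hp0 hp1 hq0 hq1 (n := n)
  set μ := sbmMeasure M n p q with hμ
  have hsub : {ω : Sym2 (Vtx M n) → Bool | a ≤ deg ω v} ⊆
      {ω | Real.exp (t * a) ≤ Real.exp (t * deg ω v)} :=
    fun ω h => Real.exp_le_exp.2 (mul_le_mul_of_nonneg_left h ht)
  have h1 : (μ {ω | a ≤ deg ω v}).toReal ≤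
      (μ {ω | Real.exp (t * a) ≤ Real.exp (t * deg ω v)}).toReal :=
    ENNReal.toReal_mono (measure_ne_top _ _) (measure_mono hsub)
  have hmarkov := mul_meas_ge_le_integral_of_nonneg (μ := μ)
    (f := fun ω => Real.exp (t * deg ω v))
    (Filter.Eventually.of_forall fun ω => (Real.exp_pos _).le) Integrable.of_finite
    (Real.exp (t * a))
  have hint : ∫ ω, Real.exp (t * deg ω v) ∂μ ≤
      Real.exp (gam M n p q v.1 * (Real.exp t - 1)) := by
    rw [hμ, integral_exp_deg hp0 hp1 hq0 hq1]
    exact prod_one_add_le hp0 hp1 hq0 hq1 v (by linarith [(Real.exp_pos t).le])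
  have h2 : (μ {ω | Real.exp (t * a) ≤ Real.exp (t * deg ω v)}).toReal ≤
      Real.exp (gam M n p q v.1 * (Real.exp t - 1)) / Real.exp (t * a) := by
    rw [le_div_iff₀ (Real.exp_pos _)]
    calc (μ {ω | Real.exp (t * a) ≤ Real.exp (t * deg ω v)}).toReal * Real.exp (t * a)
        = Real.exp (t * a) * (μ {ω | Real.exp (t * a) ≤ Real.exp (t * deg ω v)}).toReal := by
          ring
      _ ≤ ∫ ω, Real.exp (t * deg ω v) ∂μ := hmarkov
      _ ≤ _ := hint
  rw [← Real.exp_sub] at h2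
  exact h1.trans h2

lemma chernoff_le {M n : ℕ} {p : Fin M → ℝ} {q : ℝ}
    (hp0 : ∀ m, 0 ≤ p m) (hp1 : ∀ m, p m ≤ 1) (hq0 : 0 ≤ q) (hq1 : q ≤ 1)
    (v : Vtx M n) (t a : ℝ) (ht : 0 ≤ t) :
    (sbmMeasure M n p q {ω | deg ω v ≤ a}).toReal ≤
      Real.exp (gam M n p q v.1 * (Real.exp (-t) - 1) + t * a) := by
  haveI := sbm_isProb hp0 hp1 hq0 hq1 (n := n)
  set μ := sbmMeasure M n p q with hμ
  have hsub : {ω : Sym2 (Vtx M n) → Bool | deg ω v ≤ a} ⊆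
      {ω | Real.exp (-t * a) ≤ Real.exp (-t * deg ω v)} := by
    intro ω h
    have h' : deg ω v ≤ a := h
    exact Real.exp_le_exp.2 (by nlinarith [mul_nonneg ht (sub_nonneg.2 h')])
  have h1 : (μ {ω | deg ω v ≤ a}).toReal ≤
      (μ {ω | Real.exp (-t * a) ≤ Real.exp (-t * deg ω v)}).toReal :=
    ENNReal.toReal_mono (measure_ne_top _ _) (measure_mono hsub)
  have hmarkov := mul_meas_ge_le_integral_of_nonneg (μ := μ)
    (f := fun ω => Real.exp (-t * deg ω v))
    (Filter.Eventually.of_forall fun ω => (Real.exp_pos _).le) Integrable.of_finite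
    (Real.exp (-t * a))
  have hint : ∫ ω, Real.exp (-t * deg ω v) ∂μ ≤
      Real.exp (gam M n p q v.1 * (Real.exp (-t) - 1)) := by
    rw [hμ, integral_exp_deg hp0 hp1 hq0 hq1]
    exact prod_one_add_le hp0 hp1 hq0 hq1 v (by linarith [(Real.exp_pos (-t)).le])
  have h2 : (μ {ω | Real.exp (-t * a) ≤ Real.exp (-t * deg ω v)}).toReal ≤
      Real.exp (gam M n p q v.1 * (Real.exp (-t) - 1)) / Real.exp (-t * a) := by
    rw [le_div_iff₀ (Real.exp_pos _)]
    calc (μ {ω | Real.exp (-t * a) ≤ Real.exp (-t * deg ω v)}).toReal * Real.exp (-t * a)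
        = Real.exp (-t * a) * (μ {ω | Real.exp (-t * a) ≤ Real.exp (-t * deg ω v)}).toReal := by
          ring
      _ ≤ ∫ ω, Real.exp (-t * deg ω v) ∂μ := hmarkov
      _ ≤ _ := hint
  rw [← Real.exp_sub] at h2
  refine h1.trans (h2.trans ?_)
  apply Real.exp_le_exp.2
  ring_nf
  exact le_refl _

lemma exp_le_quad {t : ℝ} (h0 : 0 ≤ t) (h1 : t ≤ 1/2) : Real.exp t ≤ 1 + t + 2*t^2 := by
  have h2 : 1 - t ≤ Real.exp (-t) := by linarith [Real.add_one_le_exp (-t)]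
  have key : Real.exp t * (1 - t) ≤ 1 := by
    calc Real.exp t * (1 - t) ≤ Real.exp t * Real.exp (-t) :=
          mul_le_mul_of_nonneg_left h2 (Real.exp_pos t).le
      _ = 1 := by rw [← Real.exp_add]; simp
  nlinarith [Real.exp_pos t, sq_nonneg t]

lemma exp_neg_le_quad {t : ℝ} (h0 : 0 ≤ t) : Real.exp (-t) ≤ 1 - t + t^2 := by
  have h2 : 1 + t ≤ Real.exp t := by linarith [Real.add_one_le_exp t]
  have key : Real.exp (-t) * (1 + t) ≤ 1 := by
    calc Real.exp (-t) * (1 + t) ≤ Real.exp (-t) * Real.exp t :=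
          mul_le_mul_of_nonneg_left h2 (Real.exp_pos _).le
      _ = 1 := by rw [← Real.exp_add]; simp
  nlinarith [Real.exp_pos (-t), pow_nonneg h0 3]

lemma chernoff_upper_delta {M n : ℕ} {p : Fin M → ℝ} {q : ℝ}
    (hp0 : ∀ m, 0 ≤ p m) (hp1 : ∀ m, p m ≤ 1) (hq0 : 0 ≤ q) (hq1 : q ≤ 1)
    (v : Vtx M n) {δ : ℝ} (h0 : 0 ≤ δ) (h1 : δ ≤ 1/4) (hγ : 0 ≤ gam M n p q v.1) :
    (sbmMeasure M n p q {ω | (1+δ) * gam M n p q v.1 ≤ deg ω v}).toReal ≤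
      Real.exp (-(gam M n p q v.1 * δ^2/8)) := by
  refine (chernoff_ge hp0 hp1 hq0 hq1 v (δ/4) ((1+δ) * gam M n p q v.1) (by linarith)).trans ?_
  apply Real.exp_le_exp.2
  have he : Real.exp (δ/4) ≤ 1 + δ/4 + 2*(δ/4)^2 := exp_le_quad (by linarith) (by linarith)
  set γ := gam M n p q v.1
  have : γ * (Real.exp (δ/4) - 1) ≤ γ * (δ/4 + 2*(δ/4)^2) :=
    mul_le_mul_of_nonneg_left (by linarith) hγ
  nlinarith [mul_nonneg hγ (sq_nonneg δ)]

lemma chernoff_lower_delta {M n : ℕ} {p : Fin M → ℝ} {q : ℝ}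
    (hp0 : ∀ m, 0 ≤ p m) (hp1 : ∀ m, p m ≤ 1) (hq0 : 0 ≤ q) (hq1 : q ≤ 1)
    (v : Vtx M n) {δ : ℝ} (h0 : 0 ≤ δ) (h1 : δ ≤ 1/4) (hγ : 0 ≤ gam M n p q v.1) :
    (sbmMeasure M n p q {ω | deg ω v ≤ (1-δ) * gam M n p q v.1}).toReal ≤
      Real.exp (-(gam M n p q v.1 * δ^2/8)) := by
  refine (chernoff_le hp0 hp1 hq0 hq1 v (δ/2) ((1-δ) * gam M n p q v.1) (by linarith)).trans ?_
  apply Real.exp_le_exp.2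
  have he : Real.exp (-(δ/2)) ≤ 1 - δ/2 + (δ/2)^2 := exp_neg_le_quad (by linarith)
  set γ := gam M n p q v.1
  have : γ * (Real.exp (-(δ/2)) - 1) ≤ γ * (-(δ/2) + (δ/2)^2) :=
    mul_le_mul_of_nonneg_left (by linarith) hγ
  nlinarith [mul_nonneg hγ (sq_nonneg δ)]

lemma prob_bad_le {M n : ℕ} {p : Fin M → ℝ} {q : ℝ}
    (hp0 : ∀ m, 0 ≤ p m) (hp1 : ∀ m, p m ≤ 1) (hq0 : 0 ≤ q) (hq1 : q ≤ 1)
    {δ g : ℝ} (h0 : 0 ≤ δ) (h1 : δ ≤ 1/4) (hg0 : 0 ≤ g)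
    (hg : ∀ m, g ≤ gam M n p q m) :
    sbmMeasure M n p q {ω | ¬ ∀ v, |deg ω v - gam M n p q v.1| ≤ δ * gam M n p q v.1} ≤
      ENNReal.ofReal (2 * (M * n : ℝ) * Real.exp (-(g * δ^2/8))) := by
  haveI := sbm_isProb hp0 hp1 hq0 hq1 (n := n)
  set μ := sbmMeasure M n p q with hμ
  set U : Vtx M n → Set (Sym2 (Vtx M n) → Bool) :=
    fun v => {ω | (1+δ) * gam M n p q v.1 ≤ deg ω v} with hU
  set L : Vtx M n → Set (Sym2 (Vtx M n) → Bool) :=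
    fun v => {ω | deg ω v ≤ (1-δ) * gam M n p q v.1} with hL
  have hγ : ∀ v : Vtx M n, 0 ≤ gam M n p q v.1 := fun v => le_trans hg0 (hg v.1)
  have hsub : {ω | ¬ ∀ v, |deg ω v - gam M n p q v.1| ≤ δ * gam M n p q v.1} ⊆
      ⋃ v ∈ (Finset.univ : Finset (Vtx M n)), (U v ∪ L v) := by
    intro ω h
    push_neg at h
    obtain ⟨v, hv⟩ := h
    have h2 : δ * gam M n p q v.1 < |deg ω v - gam M n p q v.1| := hv
    refine Set.mem_biUnion (Finset.mem_univ v) ?_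
    rcases lt_abs.1 h2 with h3 | h3
    · exact Or.inl (by simp only [hU, Set.mem_setOf_eq]; linarith)
    · exact Or.inr (by simp only [hL, Set.mem_setOf_eq]; linarith)
  have hbound : ∀ v : Vtx M n, μ (U v) + μ (L v) ≤
      ENNReal.ofReal (2 * Real.exp (-(g * δ^2/8))) := by
    intro v
    have hgle : Real.exp (-(gam M n p q v.1 * δ^2/8)) ≤ Real.exp (-(g * δ^2/8)) := by
      apply Real.exp_le_exp.2
      have := mul_le_mul_of_nonneg_right (hg v.1) (sq_nonneg δ)
      linarith
    have hUb : μ (U v) ≤ ENNReal.ofReal (Real.exp (-(g * δ^2/8))) := by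
      rw [ENNReal.le_ofReal_iff_toReal_le (measure_ne_top _ _) (Real.exp_pos _).le]
      exact (chernoff_upper_delta hp0 hp1 hq0 hq1 v h0 h1 (hγ v)).trans hgle
    have hLb : μ (L v) ≤ ENNReal.ofReal (Real.exp (-(g * δ^2/8))) := by
      rw [ENNReal.le_ofReal_iff_toReal_le (measure_ne_top _ _) (Real.exp_pos _).le]
      exact (chernoff_lower_delta hp0 hp1 hq0 hq1 v h0 h1 (hγ v)).trans hgle
    calc μ (U v) + μ (L v) ≤ ENNReal.ofReal (Real.exp (-(g * δ^2/8))) +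
          ENNReal.ofReal (Real.exp (-(g * δ^2/8))) := add_le_add hUb hLb
      _ = ENNReal.ofReal (2 * Real.exp (-(g * δ^2/8))) := by
          rw [← ENNReal.ofReal_add (Real.exp_pos _).le (Real.exp_pos _).le]
          norm_num [two_mul]
  calc μ _ ≤ μ (⋃ v ∈ (Finset.univ : Finset (Vtx M n)), (U v ∪ L v)) := measure_mono hsub
    _ ≤ ∑ v : Vtx M n, μ (U v ∪ L v) := measure_biUnion_finset_le _ _
    _ ≤ ∑ v : Vtx M n, (μ (U v) + μ (L v)) :=
        Finset.sum_le_sum fun v _ => measure_union_le _ _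
    _ ≤ ∑ _v : Vtx M n, ENNReal.ofReal (2 * Real.exp (-(g * δ^2/8))) :=
        Finset.sum_le_sum fun v _ => hbound v
    _ = (M * n : ℕ) * ENNReal.ofReal (2 * Real.exp (-(g * δ^2/8))) := by
        rw [Finset.sum_const, Finset.card_univ]
        simp [Fintype.card_prod, nsmul_eq_mul]
    _ = ENNReal.ofReal (2 * (M * n : ℝ) * Real.exp (-(g * δ^2/8))) := by
        rw [← ENNReal.ofReal_natCast (M * n), ← ENNReal.ofReal_mul (by positivity)]
        ring_nf
        congr 1
        push_cast
        ring




lemma finM_nonempty {M : ℕ} (hM : 2 ≤ M) : Nonempty (Fin M) := ⟨⟨0, by omega⟩⟩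

lemma gam_pos {M n : ℕ} {p : Fin M → ℝ} {q : ℝ} (hM : 2 ≤ M) (hn : 1 ≤ n)
    (hp0 : ∀ m, 0 < p m) (hq0 : 0 < q) (m : Fin M) : 0 < gam M n p q m := by
  have hn' : (0 : ℝ) < n := by exact_mod_cast hn
  have hM' : (1 : ℝ) ≤ M := by exact_mod_cast (by omega : 1 ≤ M)
  have := hp0 m
  unfold gam
  nlinarith [mul_pos hn' this, mul_nonneg (mul_nonneg (by linarith : (0:ℝ) ≤ (M:ℝ)-1) hn'.le) hq0.le]

lemma gmin_le {M n : ℕ} {p : Fin M → ℝ} {q : ℝ} (m : Fin M) :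
    gmin M n p q ≤ gam M n p q m :=
  csInf_le (Set.Finite.bddBelow (Set.finite_range _)) ⟨m, rfl⟩

lemma le_gmax {M n : ℕ} {p : Fin M → ℝ} {q : ℝ} (m : Fin M) :
    gam M n p q m ≤ gmax M n p q :=
  le_csSup (Set.Finite.bddAbove (Set.finite_range _)) ⟨m, rfl⟩

lemma gmin_mem {M n : ℕ} {p : Fin M → ℝ} {q : ℝ} (hM : 2 ≤ M) :
    ∃ m, gmin M n p q = gam M n p q m := by
  haveI := finM_nonempty hM
  obtain ⟨m, hm⟩ := (Set.range_nonempty (gam M n p q)).csInf_mem (Set.finite_range _)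
  exact ⟨m, hm.symm⟩

lemma gmin_pos {M n : ℕ} {p : Fin M → ℝ} {q : ℝ} (hM : 2 ≤ M) (hn : 1 ≤ n)
    (hp0 : ∀ m, 0 < p m) (hq0 : 0 < q) : 0 < gmin M n p q := by
  obtain ⟨m, hm⟩ := gmin_mem (p := p) (q := q) (n := n) hM
  rw [hm]
  exact gam_pos hM hn hp0 hq0 m

lemma inv_sqrt_bound {d1 d2 γ1 γ2 δ : ℝ} (hγ1 : 0 < γ1) (hγ2 : 0 < γ2)
    (hδ0 : 0 ≤ δ) (hδ1 : δ ≤ 1/4)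
    (h1 : |d1 - γ1| ≤ δ * γ1) (h2 : |d2 - γ2| ≤ δ * γ2) :
    |1/Real.sqrt (d1*d2) - 1/Real.sqrt (γ1*γ2)| ≤ (δ/(1-δ)) * (1/Real.sqrt (γ1*γ2)) := by
  have hd1l : (1-δ)*γ1 ≤ d1 := by have := (abs_le.1 h1).1; linarith
  have hd1u : d1 ≤ (1+δ)*γ1 := by have := (abs_le.1 h1).2; linarith
  have hd2l : (1-δ)*γ2 ≤ d2 := by have := (abs_le.1 h2).1; linarith
  have hd2u : d2 ≤ (1+δ)*γ2 := by have := (abs_le.1 h2).2; linarith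
  have hd1p : 0 < d1 := lt_of_lt_of_le (by nlinarith) hd1l
  have hd2p : 0 < d2 := lt_of_lt_of_le (by nlinarith) hd2l
  set s := Real.sqrt (γ1*γ2) with hsdef
  have hs : 0 < s := Real.sqrt_pos.2 (mul_pos hγ1 hγ2)
  set u := Real.sqrt (d1*d2) with hudef
  have hu : 0 < u := Real.sqrt_pos.2 (mul_pos hd1p hd2p)
  have hlow : (1-δ)*s ≤ u := by
    have he : (1-δ)*s = Real.sqrt (((1-δ)*γ1)*((1-δ)*γ2)) := by
      rw [show ((1-δ)*γ1)*((1-δ)*γ2) = (1-δ)^2*(γ1*γ2) by ring,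
        Real.sqrt_mul (sq_nonneg _), Real.sqrt_sq (by linarith)]
    rw [he]
    exact Real.sqrt_le_sqrt (mul_le_mul hd1l hd2l (by nlinarith) hd1p.le)
  have hup : u ≤ (1+δ)*s := by
    have he : (1+δ)*s = Real.sqrt (((1+δ)*γ1)*((1+δ)*γ2)) := by
      rw [show ((1+δ)*γ1)*((1+δ)*γ2) = (1+δ)^2*(γ1*γ2) by ring,
        Real.sqrt_mul (sq_nonneg _), Real.sqrt_sq (by linarith)]
    rw [he]
    exact Real.sqrt_le_sqrt (mul_le_mul hd1u hd2u hd2p.le (by nlinarith))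
  have h1δ : (1:ℝ) - δ ≠ 0 := by linarith
  have h1δ' : (1:ℝ) + δ ≠ 0 := by linarith
  have hs' : s ≠ 0 := ne_of_gt hs
  rw [abs_le]
  constructor
  · have hb : 1/((1+δ)*s) ≤ 1/u := one_div_le_one_div_of_le hu hup
    have he : 1/((1+δ)*s) - 1/s = -((δ/(1+δ)) * (1/s)) := by
      field_simp
      ring
    have hmono : δ/(1+δ) ≤ δ/(1-δ) :=
      div_le_div_of_nonneg_left hδ0 (by linarith) (by linarith)
    have := mul_le_mul_of_nonneg_right hmono (le_of_lt (one_div_pos.2 hs))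
    linarith
  · have hb : 1/u ≤ 1/((1-δ)*s) := one_div_le_one_div_of_le (mul_pos (by linarith : (0:ℝ) < 1-δ) hs) hlow
    have he : 1/((1-δ)*s) - 1/s = (δ/(1-δ)) * (1/s) := by
      field_simp
      ring
    linarith

lemma adj_nonneg {M n : ℕ} (ω : Sym2 (Vtx M n) → Bool) (v w : Vtx M n) : 0 ≤ adj ω v w := by
  unfold adj
  simp only [Matrix.of_apply]
  split <;> norm_num

lemma sqrt3_ge : (5/3 : ℝ) ≤ Real.sqrt 3 := by
  nlinarith [Real.sq_sqrt (by norm_num : (0:ℝ) ≤ 3), Real.sqrt_nonneg 3]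

lemma det_lemma {M n : ℕ} {p : Fin M → ℝ} {q : ℝ} (hM : 2 ≤ M) (hn : 1 ≤ n)
    (hp0 : ∀ m, 0 < p m) (hq0 : 0 < q)
    {ε : ℝ} (hε : 0 < ε) (hlog : 1 ≤ Real.log (M*n))
    (hδ4 : (Real.log (M*n) / gmin M n p q) ^ ((1:ℝ)/4) ≤ 1/4)
    (ω : Sym2 (Vtx M n) → Bool)
    (hω : ∀ v : Vtx M n, |deg ω v - gam M n p q v.1| ≤
      (Real.log (M*n) / gmin M n p q) ^ ((1:ℝ)/4) * gam M n p q v.1) :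
    (∀ v, 0 < deg ω v) ∧
      ∀ v, ∑ w, |(Bmat ω - Aprime M n p q ω) v w| ≤
        (Real.sqrt 3 + ε) * (Real.log (M*n) / gmin M n p q) ^ ((1:ℝ)/4) *
          (gmax M n p q / gmin M n p q) ^ ((1:ℝ)/2) := by
  have hgminpos := gmin_pos (p := p) (q := q) (n := n) hM hn hp0 hq0
  set δ := (Real.log (M*n) / gmin M n p q) ^ ((1:ℝ)/4) with hδdef
  have hδ0 : 0 ≤ δ := Real.rpow_nonneg (div_nonneg (by linarith) hgminpos.le) _
  have hγ : ∀ m, 0 < gam M n p q m := gam_pos hM hn hp0 hq0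
  have hdegpos : ∀ v : Vtx M n, 0 < deg ω v := by
    intro v
    have h := (abs_le.1 (hω v)).1
    have h2 := hγ v.1
    nlinarith
  refine ⟨hdegpos, fun v => ?_⟩
  set c := δ/(1-δ) with hcdef
  have hc0 : 0 ≤ c := div_nonneg hδ0 (by linarith)
  have hperw : ∀ w : Vtx M n, |(Bmat ω - Aprime M n p q ω) v w| ≤
      adj ω v w * (c * (1/Real.sqrt (gam M n p q v.1 * gam M n p q w.1))) := by
    intro w
    have hkey := inv_sqrt_bound (hγ v.1) (hγ w.1) hδ0 hδ4 (hω v) (hω w)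
    by_cases h : ω s(v, w)
    · have hadj : adj ω v w = 1 := by simp [adj, h]
      rw [Matrix.sub_apply, hadj, one_mul]
      unfold Bmat Aprime
      simp only [Matrix.of_apply, hadj]
      calc |1 / Real.sqrt (deg ω v * deg ω w) -
            1 / Real.sqrt (gam M n p q v.1 * gam M n p q w.1)|
          ≤ (δ/(1-δ)) * (1/Real.sqrt (gam M n p q v.1 * gam M n p q w.1)) := hkey
        _ = c * (1/Real.sqrt (gam M n p q v.1 * gam M n p q w.1)) := by rw [hcdef]
    · have hadj : adj ω v w = 0 := by simp [adj, h]
      rw [Matrix.sub_apply, hadj, zero_mul]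
      unfold Bmat Aprime
      simp only [Matrix.of_apply, hadj]
      simp
  set a := Real.sqrt (gam M n p q v.1) with hadef
  set b := Real.sqrt (gmax M n p q) with hbdef
  set g' := Real.sqrt (gmin M n p q) with hgdef
  have ha : 0 < a := Real.sqrt_pos.2 (hγ v.1)
  have hg' : 0 < g' := Real.sqrt_pos.2 hgminpos
  have hab : a ≤ b := Real.sqrt_le_sqrt (le_gmax v.1)
  have hsplit : Real.sqrt (gam M n p q v.1 * gmin M n p q) = a * g' :=
    Real.sqrt_mul (hγ v.1).le _
  have hγa : gam M n p q v.1 = a * a := (Real.mul_self_sqrt (hγ v.1).le).symm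
  have hdu : deg ω v ≤ (1+δ) * gam M n p q v.1 := by
    have := (abs_le.1 (hω v)).2
    linarith
  have hfrac : (1+δ) * c ≤ (Real.sqrt 3 + ε) * δ := by
    rw [hcdef, ← mul_div_assoc, div_le_iff₀ (by linarith : (0:ℝ) < 1-δ)]
    nlinarith [sqrt3_ge, mul_nonneg hδ0 hδ0, mul_nonneg (mul_nonneg hε.le hδ0)
      (by linarith : (0:ℝ) ≤ 1-δ), mul_nonneg hδ0 (by linarith : (0:ℝ) ≤ 1-4*δ)]
  have hrw : (gmax M n p q / gmin M n p q) ^ ((1:ℝ)/2) = b/g' := by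
    rw [← Real.sqrt_eq_rpow, hbdef, hgdef, Real.sqrt_div (le_trans hgminpos.le (le_trans (gmin_le ⟨0, by omega⟩) (le_gmax ⟨0, by omega⟩)))]
  calc ∑ w, |(Bmat ω - Aprime M n p q ω) v w|
      ≤ ∑ w : Vtx M n, adj ω v w *
          (c * (1/Real.sqrt (gam M n p q v.1 * gam M n p q w.1))) :=
        Finset.sum_le_sum fun w _ => hperw w
    _ ≤ ∑ w : Vtx M n, adj ω v w * (c * (1/(a*g'))) := by
        refine Finset.sum_le_sum fun w _ => ?_
        refine mul_le_mul_of_nonneg_left (mul_le_mul_of_nonneg_left ?_ hc0)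
          (adj_nonneg ω v w)
        rw [← hsplit]
        exact one_div_le_one_div_of_le (Real.sqrt_pos.2 (mul_pos (hγ v.1) hgminpos))
          (Real.sqrt_le_sqrt (mul_le_mul_of_nonneg_left (gmin_le w.1) (hγ v.1).le))
    _ = deg ω v * (c * (1/(a*g'))) := by rw [← Finset.sum_mul]; rfl
    _ ≤ ((1+δ) * gam M n p q v.1) * (c * (1/(a*g'))) :=
        mul_le_mul_of_nonneg_right hdu (by positivity)
    _ = ((1+δ) * c) * (a/g') := by rw [hγa]; field_simp
    _ ≤ ((Real.sqrt 3 + ε) * δ) * (b/g') := by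
        refine mul_le_mul hfrac ((div_le_div_iff_of_pos_right hg').2 hab) (by positivity)
          (by positivity)
    _ = (Real.sqrt 3 + ε) * δ * (gmax M n p q / gmin M n p q) ^ ((1:ℝ)/2) := by
        rw [hrw]




lemma tail_small {N' g : ℝ} (hL : 7 ≤ Real.log N') (hg : (Real.log N')^4 ≤ g)
    (hgpos : 0 < g) {δ : ℝ} (hδsq : δ^2 = Real.sqrt (Real.log N' / g)) (hN' : 0 < N') :
    2*N'*Real.exp (-(g * δ^2/8)) ≤ 2/N' := by
  set L := Real.log N' with hLdef
  have hL0 : (0:ℝ) < L := by linarith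
  have h256 : 256 * L ≤ g := by
    have h3 : (343:ℝ) ≤ L^3 := by nlinarith [pow_le_pow_left₀ (by norm_num : (0:ℝ) ≤ 7) hL 3]
    nlinarith [mul_le_mul_of_nonneg_left h3 hL0.le]
  have h1 : g * δ^2 = Real.sqrt g * Real.sqrt L := by
    rw [hδsq, Real.sqrt_div hL0.le, ← Real.div_sqrt (x := g)]
    field_simp
    rw [Real.sq_sqrt hgpos.le]
  have h2 : 16 * L ≤ Real.sqrt g * Real.sqrt L := by
    have ha : Real.sqrt (256 * L) ≤ Real.sqrt g := Real.sqrt_le_sqrt h256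
    have hb : Real.sqrt (256 * L) = 16 * Real.sqrt L := by
      rw [show (256:ℝ) = 16^2 by norm_num, Real.sqrt_mul (by positivity), Real.sqrt_sq
        (by norm_num)]
    have hc : Real.sqrt L * Real.sqrt L = L := Real.mul_self_sqrt hL0.le
    have hd := mul_le_mul_of_nonneg_right (hb ▸ ha) (Real.sqrt_nonneg L)
    nlinarith
  have hexp : Real.exp (-(g * δ^2/8)) ≤ Real.exp (-(2*L)) := by
    apply Real.exp_le_exp.2
    rw [h1]
    linarith [h2]
  have hexp2 : Real.exp (-(2*L)) = (1/N') * (1/N') := by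
    rw [show -(2*L) = -L + -L by ring, Real.exp_add, Real.exp_neg, Real.exp_log hN',
      one_div]
  calc 2*N'*Real.exp (-(g * δ^2/8)) ≤ 2*N'*Real.exp (-(2*L)) := by
        apply mul_le_mul_of_nonneg_left hexp (by positivity)
    _ = 2/N' := by rw [hexp2]; field_simp


/-- Row-sum norm bound for `R = B - A'`: under (C1), a.a.s. all degrees are positive and
`‖R‖_∞ ≤ (√3 + ε)·(log N/γ_min)^{1/4}·(γ_max/γ_min)^{1/2}`. -/
theorem statement4 (M : ℕ) (hM : 2 ≤ M)
    (p : ℕ → Fin M → ℝ) (q : ℕ → ℝ) (hpar : params M p q)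
    (hC1 : condC1 M p q) :
    ∀ ε : ℝ, 0 < ε →
      Tendsto (fun n : ℕ =>
        sbmMeasure M n (p n) (q n)
          {ω | (∀ v, 0 < deg ω v) ∧
            ∀ v, ∑ w, |(Bmat ω - Aprime M n (p n) (q n) ω) v w| ≤
              (Real.sqrt 3 + ε) *
                (Real.log (M * n) / gmin M n (p n) (q n)) ^ ((1 : ℝ)/4) *
                (gmax M n (p n) (q n) / gmin M n (p n) (q n)) ^ ((1 : ℝ)/2)})
        atTop (𝓝 1) := by
  intro ε hε
  have hp0 : ∀ n m, 0 < p n m := fun n m => ((hpar n).1 m).1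
  have hp1 : ∀ n m, p n m ≤ 1 := fun n m => ((hpar n).1 m).2.le
  have hq0 : ∀ n, 0 < q n := fun n => (hpar n).2.1.1
  have hq1 : ∀ n, q n ≤ 1 := fun n => (hpar n).2.1.2.le
  have hMR : (0:ℝ) < M := by exact_mod_cast (by omega : 0 < M)
  set E : (n : ℕ) → Set (Sym2 (Vtx M n) → Bool) := fun n =>
    {ω | (∀ v, 0 < deg ω v) ∧
      ∀ v, ∑ w, |(Bmat ω - Aprime M n (p n) (q n) ω) v w| ≤
        (Real.sqrt 3 + ε) *
          (Real.log (M * n) / gmin M n (p n) (q n)) ^ ((1 : ℝ)/4) *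
          (gmax M n (p n) (q n) / gmin M n (p n) (q n)) ^ ((1 : ℝ)/2)} with hEdef
  have hN : Tendsto (fun n : ℕ => (M:ℝ) * n) atTop atTop :=
    Tendsto.const_mul_atTop hMR tendsto_natCast_atTop_atTop
  have hlogN : Tendsto (fun n : ℕ => Real.log ((M:ℝ) * n)) atTop atTop :=
    Real.tendsto_log_atTop.comp hN
  have hev_log : ∀ᶠ n : ℕ in atTop, 7 ≤ Real.log ((M:ℝ) * n) := hlogN.eventually_ge_atTop 7
  have hev_n : ∀ᶠ n : ℕ in atTop, 1 ≤ n := eventually_ge_atTop 1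
  have hterm : ∀ m : Fin M, Tendsto
      (fun n : ℕ => (Real.log ((M:ℝ)*n))^4 / gam M n (p n) (q n) m) atTop (𝓝 0) := by
    intro m
    refine tendsto_of_tendsto_of_tendsto_of_le_of_le' tendsto_const_nhds (hC1 m) ?_ ?_
    · filter_upwards [hev_log, hev_n] with n hlog hn
      exact div_nonneg (by positivity) (gam_pos hM hn (hp0 n) (hq0 n) m).le
    · filter_upwards [hev_log, hev_n] with n hlog hn
      have hgpos := gam_pos hM hn (hp0 n) (hq0 n) m
      have hgminpos := gmin_pos (p := p n) (q := q n) (n := n) hM hn (hp0 n) (hq0 n)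
      have hR : 1 ≤ gmax M n (p n) (q n) / gmin M n (p n) (q n) :=
        (one_le_div hgminpos).2 (le_trans (gmin_le m) (le_gmax m))
      have hden : ((M:ℝ) * n) * p n m + ((M:ℝ) * n) * ((M:ℝ)-1) * q n =
          (M:ℝ) * gam M n (p n) (q n) m := by unfold gam; ring
      rw [hden, mul_div_mul_left _ _ (ne_of_gt hMR)]
      exact le_mul_of_one_le_right (div_nonneg (by positivity) hgpos.le) (by nlinarith)
  have hsum : Tendsto (fun n : ℕ =>
      ∑ m : Fin M, (Real.log ((M:ℝ)*n))^4 / gam M n (p n) (q n) m) atTop (𝓝 0) := by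
    have := tendsto_finset_sum (Finset.univ : Finset (Fin M)) (fun m _ => hterm m)
    simpa using this
  have hA : Tendsto (fun n : ℕ =>
      (Real.log ((M:ℝ)*n))^4 / gmin M n (p n) (q n)) atTop (𝓝 0) := by
    refine tendsto_of_tendsto_of_tendsto_of_le_of_le' tendsto_const_nhds hsum ?_ ?_
    · filter_upwards [hev_log, hev_n] with n hlog hn
      exact div_nonneg (by positivity) (gmin_pos hM hn (hp0 n) (hq0 n)).le
    · filter_upwards [hev_log, hev_n] with n hlog hn
      obtain ⟨m₀, hm₀⟩ := gmin_mem (p := p n) (q := q n) (n := n) hM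
      rw [hm₀]
      exact Finset.single_le_sum (f := fun m => (Real.log ((M:ℝ)*n))^4 / gam M n (p n) (q n) m)
        (fun m _ => div_nonneg (by positivity) (gam_pos hM hn (hp0 n) (hq0 n) m).le)
        (Finset.mem_univ m₀)
  have hevA : ∀ᶠ n : ℕ in atTop,
      (Real.log ((M:ℝ)*n))^4 / gmin M n (p n) (q n) < (1/4:ℝ)^4 :=
    hA.eventually (gt_mem_nhds (by norm_num))
  -- eventual bound on the complement
  have hbound : ∀ᶠ n : ℕ in atTop,
      sbmMeasure M n (p n) (q n) (E n)ᶜ ≤ ENNReal.ofReal (2 / ((M:ℝ)*n)) := by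
    filter_upwards [hev_log, hev_n, hevA] with n hlog hn hAn
    set L := Real.log ((M:ℝ)*n) with hLdef
    have hgminpos := gmin_pos (p := p n) (q := q n) (n := n) hM hn (hp0 n) (hq0 n)
    have hlog1 : 1 ≤ L := by linarith
    have hL0 : 0 < L := by linarith
    set Q := L / gmin M n (p n) (q n) with hQdef
    have hQ0 : 0 < Q := div_pos hL0 hgminpos
    set δ := Q ^ ((1:ℝ)/4) with hδdef
    have hδ0 : 0 ≤ δ := Real.rpow_nonneg hQ0.le _
    have hL4 : L^4 < gmin M n (p n) (q n) := by
      have h14 : ((1:ℝ)/4)^4 ≤ 1 := by norm_num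
      have := (div_lt_iff₀ hgminpos).1 hAn
      nlinarith
    have hQle : Q ≤ (1/4:ℝ)^4 := by
      have hLL : L ≤ L^4 := le_self_pow₀ hlog1 (by norm_num)
      exact le_trans ((div_le_div_iff_of_pos_right hgminpos).2 hLL) hAn.le
    have hδ4 : δ ≤ 1/4 := by
      have h1 : δ ≤ ((1/4:ℝ)^4) ^ ((1:ℝ)/4) := Real.rpow_le_rpow hQ0.le hQle (by norm_num)
      have h2 : (((1:ℝ)/4)^(4:ℕ)) ^ ((1:ℝ)/4) = 1/4 := by
        rw [← Real.rpow_natCast ((1:ℝ)/4) 4, ← Real.rpow_mul (by norm_num)]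
        norm_num
      rw [h2] at h1
      exact h1
    have hδsq : δ^2 = Real.sqrt Q := by
      rw [hδdef, ← Real.rpow_natCast (Q ^ ((1:ℝ)/4)) 2, ← Real.rpow_mul hQ0.le,
        Real.sqrt_eq_rpow]
      norm_num
    have hNpos : (0:ℝ) < (M:ℝ)*n := by
      have : (1:ℝ) ≤ (n:ℝ) := by exact_mod_cast hn
      nlinarith
    have hsubset : (E n)ᶜ ⊆
        {ω | ¬ ∀ v : Vtx M n, |deg ω v - gam M n (p n) (q n) v.1| ≤
          δ * gam M n (p n) (q n) v.1} := by
      intro ω hω hcon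
      exact hω (det_lemma hM hn (hp0 n) (hq0 n) hε hlog1 hδ4 ω hcon)
    calc sbmMeasure M n (p n) (q n) (E n)ᶜ
        ≤ sbmMeasure M n (p n) (q n) {ω | ¬ ∀ v : Vtx M n,
            |deg ω v - gam M n (p n) (q n) v.1| ≤ δ * gam M n (p n) (q n) v.1} :=
          measure_mono hsubset
      _ ≤ ENNReal.ofReal (2 * ((M:ℝ)*n) *
            Real.exp (-(gmin M n (p n) (q n) * δ^2/8))) :=
          prob_bad_le (fun m => (hp0 n m).le) (hp1 n) (hq0 n).le (hq1 n) hδ0 hδ4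
            hgminpos.le (fun m => gmin_le m)
      _ ≤ ENNReal.ofReal (2 / ((M:ℝ)*n)) := by
          apply ENNReal.ofReal_le_ofReal
          have := tail_small (N' := (M:ℝ)*n) (g := gmin M n (p n) (q n)) hlog hL4.le
            hgminpos hδsq hNpos
          exact this
  -- assemble
  have hc : Tendsto (fun n : ℕ => sbmMeasure M n (p n) (q n) (E n)ᶜ) atTop (𝓝 0) := by
    refine tendsto_of_tendsto_of_tendsto_of_le_of_le' tendsto_const_nhds ?_
      (Filter.Eventually.of_forall fun n => zero_le) hbound
    have hreal : Tendsto (fun n : ℕ => 2 / ((M:ℝ)*n)) atTop (𝓝 0) :=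
      Tendsto.div_atTop tendsto_const_nhds hN
    have := ENNReal.tendsto_ofReal (f := atTop) hreal
    simpa using this
  have hEq : ∀ n : ℕ, sbmMeasure M n (p n) (q n) (E n) =
      1 - sbmMeasure M n (p n) (q n) (E n)ᶜ := by
    intro n
    haveI := sbm_isProb (fun m => (hp0 n m).le) (hp1 n) (hq0 n).le (hq1 n) (n := n)
    have := prob_compl_eq_one_sub (μ := sbmMeasure M n (p n) (q n))
      (measurableSet_all (E n)ᶜ)
    rw [compl_compl] at this
    exact this
  have : Tendsto (fun n : ℕ => (1:ℝ≥0∞) - sbmMeasure M n (p n) (q n) (E n)ᶜ)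
      atTop (𝓝 1) := by
    have h := ENNReal.Tendsto.sub
      (tendsto_const_nhds : Tendsto (fun _ : ℕ => (1:ℝ≥0∞)) atTop (𝓝 1))
      hc (Or.inl ENNReal.one_ne_top)
    simpa using h
  simp only [hEdef] at hEq ⊢
  exact (Filter.tendsto_congr fun n => (hEq n).symm).1 this
end SBM
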